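/- Let Λ, α be positive integers with α ≤ Λ, and let a : [1..Λ] → ℚ with a(j) ≥ 0 for all j and Σ_j a(j) = 1. With c(j) and d(j) as in the max-link gap analysis (c(j) = C(Λ-α,j)/(C(Λ,j)(C(j+α,j)-1)) + (C(Λ,α)-C(Λ-j,α))/(α C(Λ,α)), d(j) = C(Λ,α+j)/(C(Λ,α) C(Λ,j)) + (C(Λ,α)-C(Λ-j,α))/(α C(Λ,α))), we have Σ_j c(j)·a(j) ≤ 2·Σ_j d(j)·a(j). Consequently max(L, J) ≤ Σ_j c(j) a(j) ≤ 4·( (1/2)·Σ_j d(j) a(j) ), i.e., the achievable max-link load is within a factor 4 of the lower bound. -/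

import Mathlib

theorem stmt_14 (Λ α : ℕ) (hΛ : 0 < Λ) (hα : 0 < α) (hαΛ : α ≤ Λ)
    (a : ℕ → ℚ) (ha_nonneg : ∀ j ∈ Finset.Icc 1 Λ, 0 ≤ a j)
    (ha_sum : ∑ j ∈ Finset.Icc 1 Λ, a j = 1)
    (c d L J : ℕ → ℚ)
    (hc : ∀ j, c j = (Nat.choose (Λ - α) j : ℚ) /
          (Nat.choose Λ j * ((Nat.choose (j + α) j : ℚ) - 1)) +
        ((Nat.choose Λ α : ℚ) - Nat.choose (Λ - j) α) / (α * Nat.choose Λ α))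
    (hd : ∀ j, d j = (Nat.choose Λ (α + j) : ℚ) /
          (Nat.choose Λ α * Nat.choose Λ j) +
        ((Nat.choose Λ α : ℚ) - Nat.choose (Λ - j) α) / (α * Nat.choose Λ α))
    (hL : ∀ j, L j = (Nat.choose (Λ - α) j : ℚ) /
          (Nat.choose Λ j * ((Nat.choose (j + α) j : ℚ) - 1)))
    (hJ : ∀ j, J j = ((Nat.choose Λ α : ℚ) - Nat.choose (Λ - j) α) /
          (α * Nat.choose Λ α)) :
    (∑ j ∈ Finset.Icc 1 Λ, c j * a j ≤ 2 * ∑ j ∈ Finset.Icc 1 Λ, d j * a j) ∧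
      max (∑ j ∈ Finset.Icc 1 Λ, L j * a j) (∑ j ∈ Finset.Icc 1 Λ, J j * a j) ≤
        4 * ((1 / 2) * ∑ j ∈ Finset.Icc 1 Λ, d j * a j) := by
  -- pointwise facts for j ∈ Icc 1 Λ
  have key : ∀ j ∈ Finset.Icc 1 Λ, 0 ≤ L j ∧ 0 ≤ J j ∧ c j = L j + J j ∧ c j ≤ 2 * d j := by
    intro j hj
    simp only [Finset.mem_Icc] at hj
    obtain ⟨hj1, hjΛ⟩ := hj
    set A : ℚ := (Nat.choose (Λ - α) j : ℚ) with hA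
    set B : ℚ := (Nat.choose (j + α) j : ℚ) with hBdef
    set P : ℚ := (Nat.choose Λ j : ℚ) with hP
    set Q : ℚ := (Nat.choose Λ α : ℚ) with hQ
    set E : ℚ := (Nat.choose Λ (α + j) : ℚ) with hE
    have hPpos : 0 < P := by
      rw [hP]; exact_mod_cast Nat.choose_pos hjΛ
    have hQpos : 0 < Q := by
      rw [hQ]; exact_mod_cast Nat.choose_pos hαΛ
    have hB2 : (2 : ℚ) ≤ B := by
      rw [hBdef]
      have : j + 1 ≤ Nat.choose (j + α) j := by
        calc j + 1 = Nat.choose (j + 1) j := (Nat.choose_succ_self_right j).symm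
        _ ≤ Nat.choose (j + α) j := Nat.choose_le_choose j (by omega)
      have := this
      have h2 : 2 ≤ Nat.choose (j + α) j := by omega
      exact_mod_cast h2
    have hAnn : 0 ≤ A := by positivity
    have hEnn : 0 ≤ E := by positivity
    -- the identity E * B = Q * A
    have hId : E * B = Q * A := by
      by_cases hcase : α + j ≤ Λ
      · have hnat := Nat.choose_mul (n := Λ) (Nat.le_add_right α j)
        have hsymm : Nat.choose (α + j) α = Nat.choose (j + α) j := by
          rw [Nat.add_comm α j, Nat.choose_symm_add]
        rw [hsymm, Nat.add_sub_cancel_left] at hnat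
        rw [hE, hBdef, hQ, hA]
        exact_mod_cast hnat
      · have h1 : Nat.choose Λ (α + j) = 0 := Nat.choose_eq_zero_of_lt (by omega)
        have h2 : Nat.choose (Λ - α) j = 0 := Nat.choose_eq_zero_of_lt (by omega)
        simp [hE, hA, h1, h2]
    have hJnn : 0 ≤ J j := by
      rw [hJ]
      apply div_nonneg
      · have : Nat.choose (Λ - j) α ≤ Nat.choose Λ α :=
          Nat.choose_le_choose α (Nat.sub_le Λ j)
        have := (Nat.cast_le (α := ℚ)).mpr this
        linarith
      · positivity
    have hLnn : 0 ≤ L j := by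
      rw [hL]
      apply div_nonneg hAnn
      have : (0:ℚ) ≤ B - 1 := by linarith
      positivity
    refine ⟨hLnn, hJnn, by rw [hc, hL, hJ], ?_⟩
    -- main inequality: L j ≤ 2 * first term of d
    have hmain : A / (P * (B - 1)) ≤ 2 * (E / (Q * P)) := by
      have hrw : 2 * (E / (Q * P)) = (2 * E) / (Q * P) := by ring
      rw [hrw, div_le_div_iff₀ (by nlinarith) (by positivity)]
      nlinarith [mul_nonneg hEnn hPpos.le]
    rw [hc, hd]
    have := hJnn
    rw [hJ] at this
    linarith
  -- sums
  have hann : ∀ j ∈ Finset.Icc 1 Λ, 0 ≤ a j := ha_nonneg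
  have h1 : ∑ j ∈ Finset.Icc 1 Λ, c j * a j ≤ 2 * ∑ j ∈ Finset.Icc 1 Λ, d j * a j := by
    rw [Finset.mul_sum]
    apply Finset.sum_le_sum
    intro j hj
    have hk := key j hj
    calc c j * a j ≤ (2 * d j) * a j :=
          mul_le_mul_of_nonneg_right hk.2.2.2 (hann j hj)
    _ = 2 * (d j * a j) := by ring
  refine ⟨h1, ?_⟩
  have hLc : ∑ j ∈ Finset.Icc 1 Λ, L j * a j ≤ ∑ j ∈ Finset.Icc 1 Λ, c j * a j := by
    apply Finset.sum_le_sum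
    intro j hj
    have hk := key j hj
    have : L j ≤ c j := by rw [hk.2.2.1]; linarith [hk.2.1]
    exact mul_le_mul_of_nonneg_right this (hann j hj)
  have hJc : ∑ j ∈ Finset.Icc 1 Λ, J j * a j ≤ ∑ j ∈ Finset.Icc 1 Λ, c j * a j := by
    apply Finset.sum_le_sum
    intro j hj
    have hk := key j hj
    have : J j ≤ c j := by rw [hk.2.2.1]; linarith [hk.1]
    exact mul_le_mul_of_nonneg_right this (hann j hj)
  have h4 : (4:ℚ) * ((1 / 2) * ∑ j ∈ Finset.Icc 1 Λ, d j * a j)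
      = 2 * ∑ j ∈ Finset.Icc 1 Λ, d j * a j := by ring
  rw [h4, max_le_iff]
  exact ⟨hLc.trans h1, hJc.trans h1⟩
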